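/- There is no 3-colouring φ : {0,1,2,3} → {0,1,2} and infinite C_4-word u such that φ(u) is square-free; hence γ(C_4) = 4 (four colours are necessary, and the identity colouring with 4 colours suffices). -/

import Mathlib

def InfSqFree {α : Type*} (w : ℕ → α) : Prop :=
  ∀ m k, 0 < k → ∃ i < k, w (m + i) ≠ w (m + k + i)

/-- Adjacency in the cycle `C₄` on `{0,1,2,3}` with edges `01`, `12`, `23`, `30`. -/
def C4Adj (a b : Fin 4) : Prop := (a.val + 1) % 4 = b.val ∨ (b.val + 1) % 4 = a.val

instance : ∀ a b : Fin 4, Decidable (C4Adj a b) := fun a b => by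
  unfold C4Adj; infer_instance

/-! ### Negative part: a verified bounded search.

Colour words are encoded as natural numbers in base `4`, with the most recent
letter least significant. -/

/-- Is there a square, of half-length `k`, at the (least significant) end of `W`? -/
def sqAtN (W : ℕ) (k : ℕ) : Bool := (W % 4^(2*k)) / 4^k == W % 4^k

/-- Is there a square of half-length `1 ≤ k ≤ K` at the end of `W`? -/
def anySqN (W : ℕ) : ℕ → Bool
  | 0 => false
  | k+1 => sqAtN W (k+1) || anySqN W k

/-- Bounded search: is there a walk extension (of length `d`, last vertex `v`,
colour word so far `W` of length `n`) whose colour word stays square-free? -/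
def srchN (φ : Fin 4 → Fin 3) (W n : ℕ) (v : Fin 4) : ℕ → Bool
  | 0 => !(anySqN W (n/2))
  | d+1 => !(anySqN W (n/2)) &&
      (srchN φ (W*4 + (φ (v+1)).val) (n+1) (v+1) d ||
       srchN φ (W*4 + (φ (v+3)).val) (n+1) (v+3) d)

/-- The base-4 encoding of the word `c 0, c 1, ..., c (n-1)`, most recent letter
least significant. -/
def Ew (c : ℕ → ℕ) : ℕ → ℕ
  | 0 => 0
  | n+1 => Ew c n * 4 + c n

lemma Ew_digit (c : ℕ → ℕ) (hc : ∀ j, c j < 4) :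
    ∀ n i, i < n → Ew c n / 4^i % 4 = c (n-1-i) := by
  intro n
  induction n with
  | zero => exact fun i hi => absurd hi (by omega)
  | succ n ih =>
    intro i hi
    cases i with
    | zero =>
      rw [pow_zero, Nat.div_one, show n+1-1-0 = n by omega]
      show (Ew c n * 4 + c n) % 4 = c n
      have := hc n; omega
    | succ i =>
      rw [show n+1-1-(i+1) = n-1-i by omega]
      show (Ew c n * 4 + c n) / 4^(i+1) % 4 = c (n-1-i)
      rw [pow_succ', ← Nat.div_div_eq_div_mul, mul_comm (Ew c n) 4,
        Nat.mul_add_div (by norm_num), Nat.div_eq_of_lt (hc n), Nat.add_zero]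
      exact ih i (by omega)

lemma mod_pow_digit (x j M : ℕ) (h : j < M) : (x % 4^M) / 4^j % 4 = x / 4^j % 4 := by
  rw [← Nat.mod_mul_right_div_self, ← Nat.mod_mul_right_div_self, ← pow_succ,
      Nat.mod_mod_of_dvd _ (pow_dvd_pow 4 (by omega))]

lemma sqAtN_sound (c : ℕ → ℕ) (hc : ∀ j, c j < 4) (n k : ℕ) (hk : 0 < k)
    (h2 : 2*k ≤ n) (h : sqAtN (Ew c n) k = true) :
    ∀ i' < k, c (n-2*k+i') = c (n-k+i') := by
  intro i' hi'
  rw [sqAtN, beq_iff_eq] at h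
  have hd : ((Ew c n % 4^(2*k)) / 4^k) / 4^(k-1-i') % 4
      = (Ew c n % 4^k) / 4^(k-1-i') % 4 := by rw [h]
  rw [Nat.div_div_eq_div_mul, ← pow_add] at hd
  rw [mod_pow_digit _ _ _ (by omega), mod_pow_digit _ _ _ (by omega)] at hd
  rw [Ew_digit c hc n _ (by omega), Ew_digit c hc n _ (by omega)] at hd
  rw [show n-1-(k+(k-1-i')) = n-2*k+i' by omega,
      show n-1-(k-1-i') = n-k+i' by omega] at hd
  exact hd

lemma anySqN_false (W : ℕ → Fin 3) (c : ℕ → ℕ) (hcW : ∀ j, c j = (W j).val)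
    (hsf : InfSqFree W) (n : ℕ) :
    ∀ K, 2*K ≤ n → anySqN (Ew c n) K = false := by
  have hc : ∀ j, c j < 4 := fun j => by
    rw [hcW j]; have := (W j).is_lt; omega
  intro K
  induction K with
  | zero => intro _; rfl
  | succ K ih =>
    intro hK
    rw [anySqN, ih (by omega), Bool.or_false, Bool.eq_false_iff]
    intro htr
    obtain ⟨i, hi, hne⟩ := hsf (n - 2*(K+1)) (K+1) (Nat.succ_pos K)
    have hcc := sqAtN_sound c hc n (K+1) (Nat.succ_pos K) hK htr i hi
    rw [hcW, hcW] at hcc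
    apply hne
    rw [show n - 2*(K+1) + (K+1) + i = n - (K+1) + i by omega]
    exact Fin.val_injective hcc

lemma adj_cases : ∀ a b : Fin 4, C4Adj a b → b = a + 1 ∨ b = a + 3 := by decide

set_option maxHeartbeats 1000000 in
lemma srchN_spec : ∀ (φ : Fin 4 → Fin 3) (v : Fin 4),
    srchN φ (φ v).val 1 v 15 = false := by
  decide

/-! ### Auxiliary machinery for the positive part. -/

/-- `xw n` is the parity of the number of `2` digits in the base-3 expansion of `n`.
It is the fixed point of the morphism `0 ↦ 001`, `1 ↦ 110` and avoids squares of
even length. -/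
def xw : ℕ → Bool
  | 0 => false
  | (n+1) => xor (xw ((n+1)/3)) (decide ((n+1) % 3 = 2))
  decreasing_by omega

lemma xw_pos (n : ℕ) (h : 0 < n) :
    xw n = xor (xw (n/3)) (decide (n % 3 = 2)) := by
  cases n with
  | zero => exact absurd h (by omega)
  | succ n => rw [xw]

lemma xw3 (n : ℕ) : xw (3*n) = xw n := by
  rcases Nat.eq_zero_or_pos n with rfl | h
  · norm_num
  · rw [xw_pos _ (by omega), show 3*n/3 = n by omega, show 3*n%3 = 0 by omega]
    simp

lemma xw31 (n : ℕ) : xw (3*n+1) = xw n := by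
  rw [xw_pos _ (by omega), show (3*n+1)/3 = n by omega, show (3*n+1)%3 = 1 by omega]
  simp

lemma xw32 (n : ℕ) : xw (3*n+2) = !(xw n) := by
  rw [xw_pos _ (by omega), show (3*n+2)/3 = n by omega, show (3*n+2)%3 = 2 by omega]
  simp [Bool.xor_true]

/-- The word `xw` contains no square of even length. -/
theorem xw_sf : ∀ k, k % 2 = 0 → 0 < k → ∀ m, ¬ (∀ i < k, xw (m+i) = xw (m+k+i)) := by
  intro k
  induction k using Nat.strong_induction_on with
  | _ k IH =>
  intro he hk m H
  rcases h3 : k % 3 with _ | _ | _ | r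
  · -- k ≡ 0 (mod 3): synchronize and descend to half-length k/3
    set k' := k/3 with hk'
    set m' := (m+2)/3 with hm'
    refine IH k' (by omega) (by omega) (by omega) m' ?_
    intro j hj
    have h1 := H (3*(m'+j) - m) (by omega)
    rw [show m + (3*(m'+j) - m) = 3*(m'+j) by omega,
        show m + k + (3*(m'+j) - m) = 3*(m'+k'+j) by omega, xw3, xw3] at h1
    exact h1
  · -- k ≡ 1 (mod 3), k ≥ 4
    have hk4 : 4 ≤ k := by omega
    set i0 := (3 - m % 3) % 3 with hi0
    obtain ⟨a, ha⟩ : ∃ a, m + i0 = 3*a := ⟨(m+i0)/3, by omega⟩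
    obtain ⟨b, hb⟩ : ∃ b, m + k + i0 = 3*b + 1 := ⟨(m+k+i0)/3, by omega⟩
    have h1 := H i0 (by omega)
    have h2 := H (i0+1) (by omega)
    rw [ha, hb, xw3, xw31] at h1
    rw [show m + (i0+1) = 3*a + 1 by omega, show m + k + (i0+1) = 3*b + 2 by omega,
        xw31, xw32] at h2
    rw [h1] at h2
    exact absurd h2 (by simp)
  · -- k ≡ 2 (mod 3): either k = 2 (direct) or k ≥ 8
    rcases eq_or_ne k 2 with rfl | hk2
    · rcases hr : m % 3 with _ | _ | _ | r
      · obtain ⟨n, rfl⟩ : ∃ n, m = 3*n := ⟨m/3, by omega⟩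
        have h0 := H 0 (by omega)
        rw [show 3*n + 0 = 3*n by omega, show 3*n + 2 + 0 = 3*n + 2 by omega,
            xw3, xw32] at h0
        exact absurd h0 (by simp)
      · obtain ⟨n, rfl⟩ : ∃ n, m = 3*n + 1 := ⟨m/3, by omega⟩
        have h0 := H 0 (by omega)
        have h1 := H 1 (by omega)
        rw [show 3*n+1 + 0 = 3*n+1 by omega, show 3*n+1 + 2 + 0 = 3*(n+1) by omega,
            xw31, xw3] at h0
        rw [show 3*n+1 + 1 = 3*n+2 by omega, show 3*n+1 + 2 + 1 = 3*(n+1)+1 by omega,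
            xw32, xw31] at h1
        rw [h0] at h1
        exact absurd h1 (by simp)
      · obtain ⟨n, rfl⟩ : ∃ n, m = 3*n + 2 := ⟨m/3, by omega⟩
        have h1 := H 1 (by omega)
        rw [show 3*n+2 + 1 = 3*(n+1) by omega, show 3*n+2 + 2 + 1 = 3*(n+1)+2 by omega,
            xw3, xw32] at h1
        exact absurd h1 (by simp)
      · omega
    · have hk8 : 8 ≤ k := by omega
      set i1 := (4 - m % 3) % 3 with hi1
      obtain ⟨a, ha⟩ : ∃ a, m + i1 = 3*a + 1 := ⟨(m+i1)/3, by omega⟩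
      obtain ⟨b, hb⟩ : ∃ b, m + k + i1 = 3*b := ⟨(m+k+i1)/3, by omega⟩
      have h1 := H i1 (by omega)
      have h2 := H (i1+1) (by omega)
      rw [ha, hb, xw31, xw3] at h1
      rw [show m + (i1+1) = 3*a + 2 by omega, show m + k + (i1+1) = 3*b + 1 by omega,
          xw32, xw31] at h2
      rw [← h1] at h2
      exact absurd h2.symm (by simp)
  · omega

def yw (n : ℕ) : Bool := xor (xw n) (decide (n % 2 = 1))

/-- The square-free walk on `C₄`, via the Gray coding `C₄ ≅ K_{2,2}`. -/
def uw (n : ℕ) : Fin 4 :=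
  if xw n then (if yw n then 2 else 3) else (if yw n then 1 else 0)

lemma uw_inj {a b : ℕ} (h : uw a = uw b) : xw a = xw b ∧ yw a = yw b := by
  unfold uw at h
  cases hxa : xw a <;> cases hya : yw a <;> cases hxb : xw b <;> cases hyb : yw b <;>
    simp [hxa, hya, hxb, hyb] at h ⊢
  all_goals exact absurd h (by decide)

lemma uw_adj (n : ℕ) : C4Adj (uw n) (uw (n+1)) := by
  have hp2 : (n+1) % 2 = 1 - n % 2 := by omega
  have hp : n % 2 = 0 ∨ n % 2 = 1 := by omega
  cases hx : xw n <;> cases hx' : xw (n+1) <;> rcases hp with hp | hp <;>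
    simp [uw, yw, hx, hx', hp, hp2] <;> decide

theorem colour_number_C4_eq_four :
    (¬ ∃ (φ : Fin 4 → Fin 3) (u : ℕ → Fin 4),
        (∀ n, C4Adj (u n) (u (n + 1))) ∧ InfSqFree (fun n => φ (u n))) ∧
    (∃ u : ℕ → Fin 4, (∀ n, C4Adj (u n) (u (n + 1))) ∧ InfSqFree u) := by
  constructor
  · rintro ⟨φ, u, hadj, hsf⟩
    set c : ℕ → ℕ := fun j => (φ (u j)).val with hc
    have hfalse := anySqN_false (fun n => φ (u n)) c (fun j => rfl) hsf
    -- soundness of the bounded search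
    have key : ∀ d n, srchN φ (Ew c (n+1)) (n+1) (u n) d = true := by
      intro d
      induction d with
      | zero =>
        intro n
        rw [srchN, hfalse (n+1) ((n+1)/2) (by omega)]
        rfl
      | succ d ih =>
        intro n
        rw [srchN, hfalse (n+1) ((n+1)/2) (by omega)]
        have hext : Ew c (n+2) = Ew c (n+1) * 4 + (φ (u (n+1))).val := rfl
        have ihn := ih (n+1)
        rw [hext] at ihn
        rcases adj_cases _ _ (hadj n) with h | h <;> rw [h] at ihn
        · rw [ihn]; rfl
        · rw [ihn, Bool.or_true]; rfl
    have h1 := key 15 0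
    have h0 : Ew c 1 = (φ (u 0)).val := by
      show Ew c 0 * 4 + c 0 = (φ (u 0)).val
      rw [show Ew c 0 = 0 from rfl]
      simp [hc]
    rw [h0, srchN_spec φ (u 0)] at h1
    exact absurd h1 (by simp)
  · refine ⟨uw, uw_adj, ?_⟩
    intro m k hk
    rcases h2 : k % 2 with _ | _ | r
    · -- even length: use even-square-freeness of xw
      by_contra hc
      push_neg at hc
      apply xw_sf k h2 hk m
      intro i hi
      exact (uw_inj (hc i hi)).1
    · -- odd length: parities mismatch at i = 0
      refine ⟨0, hk, ?_⟩
      intro h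
      simp only [Nat.add_zero] at h
      obtain ⟨hx, hy⟩ := uw_inj h
      unfold yw at hy
      rw [hx] at hy
      cases hb : xw (m+k) <;> rw [hb] at hy <;> simp at hy <;> omega
    · omega
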